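/- Let n = 2^k · p^2 be a 2-near perfect number with omitted divisors d₁ and d₂, where p is an odd prime and k is a positive integer. If both omitted divisors are powers of 2, i.e. d₁ = 2^a and d₂ = 2^b for some nonnegative integers a ≠ b, then n = 18 and {d₁, d₂} = {1, 2}. -/

import Mathlib

open ArithmeticFunction

private lemma geom2 (m : ℕ) : ∑ i ∈ Finset.range m, 2 ^ i = 2 ^ m - 1 := by
  induction m with
  | zero => simp
  | succ m ih =>
    rw [Finset.sum_range_succ, ih]
    have h1 : 1 ≤ 2 ^ m := Nat.one_le_two_pow
    have h2 : (2:ℕ) ^ (m+1) = 2 * 2 ^ m := by ring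
    omega

theorem case_1_implies_n_eq_18
    (n k p d₁ d₂ : ℕ) (hk : 0 < k) (hp : p.Prime) (hpodd : Odd p)
    (hn : n = 2 ^ k * p ^ 2)
    (hd₁ : d₁ ∣ n) (hd₂ : d₂ ∣ n) (hd₁pos : 0 < d₁) (hd₂pos : 0 < d₂)
    (hne : d₁ ≠ d₂) (hσ : ArithmeticFunction.sigma 1 n = 2 * n + d₁ + d₂)
    (hpow : ∃ a b : ℕ, a ≠ b ∧ d₁ = 2 ^ a ∧ d₂ = 2 ^ b) :
    n = 18 ∧ ((d₁ = 1 ∧ d₂ = 2) ∨ (d₁ = 2 ∧ d₂ = 1)) := by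
  obtain ⟨a, b, hab, rfl, rfl⟩ := hpow
  have hp2 : (2:ℕ) ≠ p := by
    rintro rfl
    exact (Nat.not_odd_iff_even.mpr even_two) hpodd
  have hc2p : Nat.Coprime 2 p := (Nat.coprime_primes Nat.prime_two hp).mpr hp2
  have hcop : Nat.Coprime (2 ^ k) (p ^ 2) := Nat.Coprime.pow _ _ hc2p
  have ha : a ≤ k := by
    have h1 : (2:ℕ) ^ a ∣ 2 ^ k :=
      Nat.Coprime.dvd_of_dvd_mul_right (Nat.Coprime.pow _ _ hc2p) (hn ▸ hd₁)
    exact (Nat.pow_dvd_pow_iff_le_right one_lt_two).mp h1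
  have hb : b ≤ k := by
    have h1 : (2:ℕ) ^ b ∣ 2 ^ k :=
      Nat.Coprime.dvd_of_dvd_mul_right (Nat.Coprime.pow _ _ hc2p) (hn ▸ hd₂)
    exact (Nat.pow_dvd_pow_iff_le_right one_lt_two).mp h1
  have hσ2 : ArithmeticFunction.sigma 1 (2 ^ k) = 2 ^ (k+1) - 1 := by
    rw [sigma_one_apply_prime_pow Nat.prime_two, geom2]
  have hσp : ArithmeticFunction.sigma 1 (p ^ 2) = 1 + p + p ^ 2 := by
    rw [sigma_one_apply_prime_pow hp]
    simp [Finset.sum_range_succ]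
  have hmul : ArithmeticFunction.sigma 1 n = (2 ^ (k+1) - 1) * (1 + p + p ^ 2) := by
    rw [hn, isMultiplicative_sigma.map_mul_of_coprime hcop, hσ2, hσp]
  rw [hmul, hn] at hσ
  have hK1 : 1 ≤ (2:ℕ) ^ (k+1) := Nat.one_le_two_pow
  -- expand the Nat subtraction
  have hexp : (2 ^ (k+1) - 1) * (1 + p + p ^ 2) + (1 + p + p ^ 2)
      = 2 ^ (k+1) * (1 + p + p ^ 2) := by
    rw [Nat.sub_one_mul, Nat.sub_add_cancel (Nat.le_mul_of_pos_left _ (by positivity))]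
  have h2k : 2 * (2 ^ k * p ^ 2) = 2 ^ (k+1) * p ^ 2 := by ring
  have hsplit : 2 ^ (k+1) * (1 + p + p ^ 2)
      = 2 ^ (k+1) * (1 + p) + 2 ^ (k+1) * p ^ 2 := by ring
  have key : 2 ^ (k+1) * (1 + p) = 1 + p + p ^ 2 + 2 ^ a + 2 ^ b := by
    have := hσ
    rw [h2k] at this
    have h3 : 2 ^ (k+1) * (1 + p) + 2 ^ (k+1) * p ^ 2
        = 2 ^ (k+1) * p ^ 2 + 2 ^ a + 2 ^ b + (1 + p + p ^ 2) := by
      rw [← hsplit, ← hexp, this]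
    omega
  -- bounds on 2^a + 2^b
  have hsum : 2 ^ a + 2 ^ b < 2 ^ (k+1) := by
    have hkk : (2:ℕ) ^ (k+1) = 2 ^ k + 2 ^ k := by ring
    rcases lt_or_gt_of_ne hab with h | h
    · have h1 : (2:ℕ) ^ a < 2 ^ b := Nat.pow_lt_pow_right one_lt_two h
      have h2 : (2:ℕ) ^ b ≤ 2 ^ k := Nat.pow_le_pow_right (by norm_num) hb
      omega
    · have h1 : (2:ℕ) ^ b < 2 ^ a := Nat.pow_lt_pow_right one_lt_two h
      have h2 : (2:ℕ) ^ a ≤ 2 ^ k := Nat.pow_le_pow_right (by norm_num) ha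
      omega
  have hsum3 : 3 ≤ 2 ^ a + 2 ^ b := by
    rcases lt_or_gt_of_ne hab with h | h
    · have h1 : (2:ℕ) ^ 1 ≤ 2 ^ b := Nat.pow_le_pow_right (by norm_num) (by omega)
      have h2 : (1:ℕ) ≤ 2 ^ a := Nat.one_le_two_pow
      rw [pow_one] at h1; omega
    · have h1 : (2:ℕ) ^ 1 ≤ 2 ^ a := Nat.pow_le_pow_right (by norm_num) (by omega)
      have h2 : (1:ℕ) ≤ 2 ^ b := Nat.one_le_two_pow
      rw [pow_one] at h1; omega
  have hppos : 0 < p := hp.pos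
  have hp3 : 3 ≤ p := by
    have h2 := hp.two_le
    omega
  -- K ≤ p + 1
  have hKle : 2 ^ (k+1) ≤ p + 1 := by
    by_contra hcon
    push_neg at hcon
    have h1 : (p + 2) * p ≤ 2 ^ (k+1) * p :=
      Nat.mul_le_mul_right _ (by omega)
    have hx : 2 ^ (k+1) * (1 + p) = 2 ^ (k+1) + 2 ^ (k+1) * p := by ring
    have h2 : (p + 2) * p = p ^ 2 + 2 * p := by ring
    linarith [key, hsum, hp3]
  have hKge : p + 1 ≤ 2 ^ (k+1) := by
    by_contra hcon
    push_neg at hcon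
    have h1 : 2 ^ (k+1) * (1 + p) ≤ p * (1 + p) :=
      Nat.mul_le_mul_right _ (by omega)
    have h2 : p * (1 + p) = p + p ^ 2 := by ring
    linarith [key, hsum3]
  have hKeq : 2 ^ (k+1) = p + 1 := le_antisymm hKle hKge
  have habp : 2 ^ a + 2 ^ b = p := by
    rw [hKeq] at key
    have h2 : (p + 1) * (1 + p) = 1 + 2 * p + p ^ 2 := by ring
    linarith [key]
  -- one of a, b is zero
  have hone : a = 0 ∨ b = 0 := by
    by_contra hcon
    push_neg at hcon
    have h1 : 2 ∣ 2 ^ a := dvd_pow_self 2 hcon.1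
    have h2 : 2 ∣ 2 ^ b := dvd_pow_self 2 hcon.2
    have h3 : ¬ 2 ∣ p := by
      intro hd
      exact hp2 ((Nat.prime_dvd_prime_iff_eq Nat.prime_two hp).mp hd)
    omega
  -- handle the symmetric cases to show k = 1 and {a,b} = {0,1}
  have hk1 : k = 1 ∧ ((a = 0 ∧ b = 1) ∨ (a = 1 ∧ b = 0)) := by
    have main : ∀ c : ℕ, 2 ^ c + 1 = p → c = 1 ∧ k = 1 := by
      intro c hc
      have h1 : 2 ^ c + 2 = 2 ^ (k+1) := by omega
      have h2 : (2:ℕ) ^ (k+1) = 2 * 2 ^ k := by ring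
      have hcpos : 0 < c := by
        by_contra hc0
        push_neg at hc0
        interval_cases c
        have h3 : (2:ℕ) ∣ 2 ^ k := dvd_pow_self 2 hk.ne'
        norm_num at h1
        omega
      obtain ⟨c', rfl⟩ := Nat.exists_eq_succ_of_ne_zero hcpos.ne'
      have h4 : (2:ℕ) ^ (c'+1) = 2 * 2 ^ c' := by ring
      have h5 : 2 ^ c' + 1 = 2 ^ k := by omega
      have h6 : c' = 0 := by
        by_contra hc0
        have h7 : (2:ℕ) ∣ 2 ^ c' := dvd_pow_self 2 hc0
        have h8 : (2:ℕ) ∣ 2 ^ k := dvd_pow_self 2 hk.ne'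
        omega
      subst h6
      norm_num at h5
      have h9 : k = 1 := Nat.pow_right_injective (le_refl 2)
        (by rw [pow_one]; omega : (2:ℕ) ^ k = 2 ^ 1)
      exact ⟨rfl, h9⟩
    rcases hone with h0 | h0
    · subst h0
      simp at habp
      obtain ⟨hb1, hk1⟩ := main b (by omega)
      exact ⟨hk1, Or.inl ⟨rfl, hb1⟩⟩
    · subst h0
      simp at habp
      obtain ⟨ha1, hk1⟩ := main a (by omega)
      exact ⟨hk1, Or.inr ⟨ha1, rfl⟩⟩
  obtain ⟨hk1, hcase⟩ := hk1
  subst hk1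
  have hpeq : p = 3 := by
    have : (2:ℕ) ^ (1+1) = 4 := by norm_num
    omega
  subst hpeq
  rcases hcase with ⟨rfl, rfl⟩ | ⟨rfl, rfl⟩ <;> simp [hn]
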